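/- Let I be a type and Λ : (I → ℝ) → (I → ℝ) monotone with respect to the pointwise order. Let m¹ : I → ℝ satisfy Λ m¹ ≤ m¹, and let (m̂ⁿ) be the fictitious play sequence with initial function m¹. Then for every n ≥ 1, Λ m̂ⁿ ≤ m̂ⁿ and m̂^{n+1} ≤ m̂ⁿ (pointwise). -/

import Mathlib

theorem fictitious_play_nonincreasing {I : Type*}
    (Λ : (I → ℝ) → (I → ℝ)) (hΛ : Monotone Λ)
    (m1 : I → ℝ) (hm1 : Λ m1 ≤ m1)
    (mhat : ℕ → I → ℝ) (h1 : mhat 1 = m1)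
    (hrec : ∀ n : ℕ, 1 ≤ n → mhat (n + 1) =
      fun t => (n : ℝ) / (n + 1) * mhat n t + 1 / (n + 1) * Λ (mhat n) t) :
    ∀ n : ℕ, 1 ≤ n → Λ (mhat n) ≤ mhat n ∧ mhat (n + 1) ≤ mhat n := by
  have key : ∀ n : ℕ, 1 ≤ n → Λ (mhat n) ≤ mhat n := by
    intro n hn
    induction n, hn using Nat.le_induction with
    | base => rw [h1]; exact hm1
    | succ n hn ih =>
      have hp : (0:ℝ) < (n:ℝ) + 1 := by positivity
      have hd : 1 / ((n:ℝ)+1) = 1 - (n:ℝ) / ((n:ℝ)+1) := by field_simp; ring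
      have ha : (0:ℝ) ≤ (n:ℝ) / ((n:ℝ)+1) := by positivity
      have hb : (0:ℝ) ≤ 1 / ((n:ℝ)+1) := by positivity
      have hlow : Λ (mhat n) ≤ mhat (n + 1) := by
        intro t
        rw [hrec n hn]
        have h := ih t
        simp only
        rw [hd]
        nlinarith [mul_nonneg ha (sub_nonneg.2 h)]
      have hup : mhat (n + 1) ≤ mhat n := by
        intro t
        rw [hrec n hn]
        have h := ih t
        simp only
        rw [hd]
        nlinarith [mul_nonneg hb (sub_nonneg.2 h)]
      exact le_trans (hΛ hup) hlow
  intro n hn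
  refine ⟨key n hn, ?_⟩
  intro t
  rw [hrec n hn]
  have h := key n hn t
  have hp : (0:ℝ) < (n:ℝ) + 1 := by positivity
  have hd : 1 / ((n:ℝ)+1) = 1 - (n:ℝ) / ((n:ℝ)+1) := by field_simp; ring
  have hb : (0:ℝ) ≤ 1 / ((n:ℝ)+1) := by positivity
  simp only
  rw [hd]
  nlinarith [mul_nonneg hb (sub_nonneg.2 h)]
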